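/- Let 1 ≤ k ≤ n and A ∈ ℂ^{n×n}. Suppose λ_k(p₁,p₂) = λ_{n−k+1}(p₁,p₂) for some (p₁,p₂) ∈ ℝ² \ {(0,0)}. Then: (i) Λ_k(A) ⊆ {a + ib ∈ ℂ : a·p₁ + b·p₂ = λ_k(p₁,p₂)}; and (ii) if k < (n+1)/2, then the point p = (−λ_k(p₁,p₂), p₁, p₂) satisfies f_A(p) = 0 and ∇f_A(p) = (0,0,0). -/

import Mathlib

open Matrix

noncomputable section

/-- The Hermitian real part `(A + Aᴴ)/2` of a complex matrix. -/
def ReM {n : ℕ} (A : Matrix (Fin n) (Fin n) ℂ) : Matrix (Fin n) (Fin n) ℂ :=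
  (2⁻¹ : ℂ) • (A + Aᴴ)

/-- The Hermitian imaginary part `(A - Aᴴ)/(2i)` of a complex matrix. -/
def ImM {n : ℕ} (A : Matrix (Fin n) (Fin n) ℂ) : Matrix (Fin n) (Fin n) ℂ :=
  ((2 * Complex.I)⁻¹ : ℂ) • (A - Aᴴ)

/-- The `k`-th largest eigenvalue (for `1 ≤ k ≤ n`) of a Hermitian `n × n` matrix
(with junk value `0` for non-Hermitian input): the eigenvalues sorted in increasing
order, evaluated at index `n - k`. -/
def kthEig {n : ℕ} (M : Matrix (Fin n) (Fin n) ℂ) (k : ℕ) : ℝ :=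
  if hM : M.IsHermitian then
    if h : n - k < n then (hM.eigenvalues ∘ Tuple.sort hM.eigenvalues) ⟨n - k, h⟩ else 0
  else 0

/-- `λ_k(x,y) = λ_k(x·Re A + y·Im A)`. -/
def lamXY {n : ℕ} (A : Matrix (Fin n) (Fin n) ℂ) (k : ℕ) (x y : ℝ) : ℝ :=
  kthEig ((x : ℂ) • ReM A + (y : ℂ) • ImM A) k

/-- `λ_k(θ) = λ_k(cos θ · Re A + sin θ · Im A)`. -/
def lamTheta {n : ℕ} (A : Matrix (Fin n) (Fin n) ℂ) (k : ℕ) (θ : ℝ) : ℝ :=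
  lamXY A k (Real.cos θ) (Real.sin θ)

/-- The rank-`k` numerical range, via the Li–Sze halfplane description:
`Λ_k(A) = {a + ib : a cos θ + b sin θ ≤ λ_k(θ) for all θ}`. -/
def NumRange {n : ℕ} (A : Matrix (Fin n) (Fin n) ℂ) (k : ℕ) : Set ℂ :=
  {z : ℂ | ∀ θ : ℝ, z.re * Real.cos θ + z.im * Real.sin θ ≤ lamTheta A k θ}

/-- The matrix pencil `v₀·I + v₁·Re A + v₂·Im A`. -/
def pencil {n : ℕ} (A : Matrix (Fin n) (Fin n) ℂ) (v : Fin 3 → ℝ) :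
    Matrix (Fin n) (Fin n) ℂ :=
  (v 0 : ℂ) • (1 : Matrix (Fin n) (Fin n) ℂ) + (v 1 : ℂ) • ReM A + (v 2 : ℂ) • ImM A

section Stmt12AuxSec
open Polynomial
variable {n : ℕ}

lemma charpoly_unitary_conj (U : Matrix.unitaryGroup (Fin n) ℂ)
    (D : Matrix (Fin n) (Fin n) ℂ) :
    ((U : Matrix (Fin n) (Fin n) ℂ) * D * star (U : Matrix (Fin n) (Fin n) ℂ)).charpoly
      = D.charpoly := by
  have hU : (U : Matrix (Fin n) (Fin n) ℂ) * star (U : Matrix (Fin n) (Fin n) ℂ) = 1 :=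
    Matrix.mem_unitaryGroup_iff.mp U.2
  have hU' : star (U : Matrix (Fin n) (Fin n) ℂ) * (U : Matrix (Fin n) (Fin n) ℂ) = 1 :=
    Matrix.mem_unitaryGroup_iff'.mp U.2
  set Um := ((U : Matrix (Fin n) (Fin n) ℂ)).map (C : ℂ →+* ℂ[X]) with hUm
  set sUm := (star (U : Matrix (Fin n) (Fin n) ℂ)).map (C : ℂ →+* ℂ[X]) with hsUm
  have hUs : Um * sUm = 1 := by
    rw [hUm, hsUm, ← Matrix.map_mul, hU, Matrix.map_one _ (map_zero _) (map_one _)]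
  have hUs' : sUm * Um = 1 := by
    rw [hUm, hsUm, ← Matrix.map_mul, hU', Matrix.map_one _ (map_zero _) (map_one _)]
  have hsm : (X : ℂ[X]) • (1 : Matrix (Fin n) (Fin n) ℂ[X]) = diagonal fun _ => X := by
    ext i j
    by_cases h : i = j <;> simp [Matrix.one_apply, Matrix.diagonal_apply, h]
  have key : charmatrix ((U : Matrix (Fin n) (Fin n) ℂ) * D * star (U : Matrix (Fin n) (Fin n) ℂ))
      = Um * charmatrix D * sUm := by
    unfold charmatrix
    rw [Matrix.mul_sub, Matrix.sub_mul]
    congr 1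
    · rw [scalar_apply, Matrix.mul_assoc, ← Matrix.smul_eq_diagonal_mul, Matrix.mul_smul,
        hUs, hsm]
    · simp only [RingHom.mapMatrix_apply]
      rw [← Matrix.map_mul, ← Matrix.map_mul]
  rw [Matrix.charpoly, Matrix.charpoly, key, Matrix.det_mul, Matrix.det_mul,
    mul_comm, ← mul_assoc, ← Matrix.det_mul, hUs', Matrix.det_one, one_mul]

lemma charpoly_diag (d : Fin n → ℝ) :
    (Matrix.diagonal (fun i => (d i : ℂ))).charpoly = ∏ i, (X - C ((d i : ℂ))) := by
  rw [Matrix.charpoly_of_upperTriangular _ (Matrix.blockTriangular_diagonal _)]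
  simp

lemma eig_multiset {M : Matrix (Fin n) (Fin n) ℂ} (hM : M.IsHermitian)
    (U : Matrix.unitaryGroup (Fin n) ℂ) (d : Fin n → ℝ)
    (h : M = (U : Matrix (Fin n) (Fin n) ℂ) * Matrix.diagonal (fun i => (d i : ℂ))
      * star (U : Matrix (Fin n) (Fin n) ℂ)) :
    (↑(List.ofFn hM.eigenvalues) : Multiset ℝ) = ↑(List.ofFn d) := by
  have h1 : M.charpoly = ∏ i, (X - C ((d i : ℂ))) := by
    rw [h, charpoly_unitary_conj, charpoly_diag]
  have h2 : M.charpoly = ∏ i, (X - C ((hM.eigenvalues i : ℂ))) := by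
    conv_lhs => rw [hM.spectral_theorem, Unitary.conjStarAlgAut_apply]
    rw [charpoly_unitary_conj]
    have : Matrix.diagonal ((RCLike.ofReal : ℝ → ℂ) ∘ hM.eigenvalues)
        = Matrix.diagonal (fun i => ((hM.eigenvalues i : ℝ) : ℂ)) := rfl
    rw [this, charpoly_diag]
  have key : ∀ f : Fin n → ℝ, (∏ i, (X - C ((f i : ℂ)))).roots
      = (↑(List.ofFn fun i => ((f i : ℝ) : ℂ)) : Multiset ℂ) := by
    intro f
    have := Polynomial.roots_multiset_prod_X_sub_C
      ((↑(List.ofFn fun i => ((f i : ℝ) : ℂ)) : Multiset ℂ))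
    rw [← this]
    congr 1
    rw [Multiset.map_coe, List.map_ofFn]
    rw [Finset.prod_eq_multiset_prod]
    congr 1
    rw [Fin.univ_def]
    simp [Multiset.map_coe, List.ofFn_eq_map, Function.comp_def]
  have h3 := key hM.eigenvalues
  rw [← h2, h1, key d] at h3
  have h4 : Multiset.map (Complex.ofReal) (↑(List.ofFn d) : Multiset ℝ)
      = Multiset.map (Complex.ofReal) (↑(List.ofFn hM.eigenvalues) : Multiset ℝ) := by
    rw [Multiset.map_coe, Multiset.map_coe, List.map_ofFn, List.map_ofFn]
    exact h3
  exact (Multiset.map_injective Complex.ofReal_injective h4).symm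

lemma sort_eq_of_multiset {f g : Fin n → ℝ}
    (h : (↑(List.ofFn g) : Multiset ℝ) = ↑(List.ofFn f)) (hmon : Monotone g) :
    g = f ∘ Tuple.sort f := by
  apply List.ofFn_injective
  exact List.Perm.eq_of_sortedLE hmon.sortedLE_ofFn (Tuple.monotone_sort f).sortedLE_ofFn
    ((Multiset.coe_eq_coe.mp h).trans ((Tuple.sort f).ofFn_comp_perm f).symm)

/-- Sorted eigenvalues of a Hermitian matrix. -/
def srtEig {M : Matrix (Fin n) (Fin n) ℂ} (hM : M.IsHermitian) : Fin n → ℝ :=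
  hM.eigenvalues ∘ Tuple.sort hM.eigenvalues

lemma srtEig_monotone {M : Matrix (Fin n) (Fin n) ℂ} (hM : M.IsHermitian) :
    Monotone (srtEig hM) := Tuple.monotone_sort _

lemma srtEig_multiset {M : Matrix (Fin n) (Fin n) ℂ} (hM : M.IsHermitian) :
    (↑(List.ofFn (srtEig hM)) : Multiset ℝ) = ↑(List.ofFn hM.eigenvalues) :=
  Multiset.coe_eq_coe.mpr ((Tuple.sort hM.eigenvalues).ofFn_comp_perm hM.eigenvalues)

lemma eig_multiset_smul {S : Matrix (Fin n) (Fin n) ℂ} (hS : S.IsHermitian) (c : ℝ)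
    {M : Matrix (Fin n) (Fin n) ℂ} (hM : M.IsHermitian) (hMS : M = (c : ℂ) • S) :
    (↑(List.ofFn hM.eigenvalues) : Multiset ℝ)
      = ↑(List.ofFn fun i => c * hS.eigenvalues i) := by
  apply eig_multiset hM hS.eigenvectorUnitary
  rw [hMS]
  conv_lhs => rw [hS.spectral_theorem, Unitary.conjStarAlgAut_apply]
  rw [show ((c : ℂ) • ((hS.eigenvectorUnitary : Matrix (Fin n) (Fin n) ℂ)
      * diagonal (RCLike.ofReal ∘ hS.eigenvalues) * star (hS.eigenvectorUnitary : Matrix (Fin n) (Fin n) ℂ)))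
      = (hS.eigenvectorUnitary : Matrix (Fin n) (Fin n) ℂ)
        * ((c : ℂ) • diagonal (RCLike.ofReal ∘ hS.eigenvalues))
        * star (hS.eigenvectorUnitary : Matrix (Fin n) (Fin n) ℂ) by
    rw [Matrix.mul_smul, Matrix.smul_mul]]
  congr 2
  ext i j
  by_cases h : i = j <;> simp [Matrix.diagonal_apply, h, Complex.ofReal_mul]

lemma srtEig_smul {S : Matrix (Fin n) (Fin n) ℂ} (hS : S.IsHermitian) {c : ℝ} (hc : 0 ≤ c)
    {M : Matrix (Fin n) (Fin n) ℂ} (hM : M.IsHermitian) (hMS : M = (c : ℂ) • S) (i : Fin n) :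
    srtEig hM i = c * srtEig hS i := by
  have h : (fun i => c * srtEig hS i) = hM.eigenvalues ∘ Tuple.sort hM.eigenvalues := by
    apply sort_eq_of_multiset
    · rw [show (List.ofFn fun i => c * srtEig hS i)
          = List.map (fun x => c * x) (List.ofFn (srtEig hS)) by rw [List.map_ofFn]; rfl]
      rw [← Multiset.map_coe, srtEig_multiset, Multiset.map_coe, List.map_ofFn,
        eig_multiset_smul hS c hM hMS]
      rfl
    · exact fun a b hab => mul_le_mul_of_nonneg_left (srtEig_monotone hS hab) hc
  exact (congrFun h i).symm

lemma srtEig_neg {S : Matrix (Fin n) (Fin n) ℂ} (hS : S.IsHermitian)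
    {M : Matrix (Fin n) (Fin n) ℂ} (hM : M.IsHermitian) (hMS : M = -S) (i : Fin n) :
    srtEig hM i = -(srtEig hS i.rev) := by
  have hMS' : M = ((-1 : ℝ) : ℂ) • S := by rw [hMS]; norm_num
  have h : (fun i => -(srtEig hS (Fin.rev i))) = hM.eigenvalues ∘ Tuple.sort hM.eigenvalues := by
    apply sort_eq_of_multiset
    · have e1 : (fun i => -(srtEig hS (Fin.rev i)))
          = (fun i => -(srtEig hS i)) ∘ (Fin.revPerm : Equiv.Perm (Fin n)) := rfl
      rw [e1, Multiset.coe_eq_coe.mpr ((Fin.revPerm : Equiv.Perm (Fin n)).ofFn_comp_perm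
        (fun i => -(srtEig hS i)))]
      rw [show (List.ofFn fun i => -(srtEig hS i))
          = List.map (fun x => (-1 : ℝ) * x) (List.ofFn (srtEig hS)) by
            rw [List.map_ofFn]; congr 1; funext x; simp [Function.comp, neg_one_mul]]
      rw [← Multiset.map_coe, srtEig_multiset, Multiset.map_coe, List.map_ofFn,
        eig_multiset_smul hS (-1) hM hMS']
      rfl
    · intro a b hab
      simp only [neg_le_neg_iff]
      exact srtEig_monotone hS (Fin.rev_le_rev.mpr hab)
  exact (congrFun h i).symm



lemma isHermitian_ReM (A : Matrix (Fin n) (Fin n) ℂ) : (ReM A).IsHermitian := by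
  unfold ReM Matrix.IsHermitian
  rw [conjTranspose_smul, conjTranspose_add, conjTranspose_conjTranspose]
  simp [add_comm, Complex.ext_iff]

lemma isHermitian_ImM (A : Matrix (Fin n) (Fin n) ℂ) : (ImM A).IsHermitian := by
  unfold ImM Matrix.IsHermitian
  rw [conjTranspose_smul, conjTranspose_sub, conjTranspose_conjTranspose]
  have : star ((2 * Complex.I)⁻¹ : ℂ) = -(2 * Complex.I)⁻¹ := by
    simp [← map_inv₀, Complex.ext_iff]
  rw [this]
  module

lemma isHermitian_real_smul {M : Matrix (Fin n) (Fin n) ℂ} (hM : M.IsHermitian) (c : ℝ) :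
    ((c : ℂ) • M).IsHermitian := by
  unfold Matrix.IsHermitian
  rw [conjTranspose_smul, hM.eq, Complex.star_def, Complex.conj_ofReal]

lemma isHermitian_xy (A : Matrix (Fin n) (Fin n) ℂ) (x y : ℝ) :
    ((x : ℂ) • ReM A + (y : ℂ) • ImM A).IsHermitian :=
  (isHermitian_real_smul (isHermitian_ReM A) x).add (isHermitian_real_smul (isHermitian_ImM A) y)

lemma kthEig_eq {M : Matrix (Fin n) (Fin n) ℂ} (hM : M.IsHermitian) {k : ℕ} (h : n - k < n) :
    kthEig M k = srtEig hM ⟨n - k, h⟩ := by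
  rw [kthEig, dif_pos hM, dif_pos h]; rfl

lemma kthEig_smul_pos {S M : Matrix (Fin n) (Fin n) ℂ} (hS : S.IsHermitian)
    (hM : M.IsHermitian) {c : ℝ} (hc : 0 < c) (hMS : M = (c : ℂ) • S) (k : ℕ) :
    kthEig M k = c * kthEig S k := by
  by_cases h : n - k < n
  · rw [kthEig_eq hM h, kthEig_eq hS h, srtEig_smul hS hc.le hM hMS]
  · rw [kthEig, kthEig, dif_pos hM, dif_pos hS, dif_neg h, dif_neg h, mul_zero]

lemma kthEig_neg {S M : Matrix (Fin n) (Fin n) ℂ} (hS : S.IsHermitian)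
    (hM : M.IsHermitian) (hMS : M = -S) {k : ℕ} (hk1 : 1 ≤ k) (hkn : k ≤ n) :
    kthEig M k = -(kthEig S (n - k + 1)) := by
  have h1 : n - k < n := by omega
  have h2 : n - (n - k + 1) < n := by omega
  rw [kthEig_eq hM h1, kthEig_eq hS h2, srtEig_neg hS hM hMS]
  have hrev : (⟨n - k, h1⟩ : Fin n).rev = ⟨n - (n - k + 1), h2⟩ := by
    ext
    simp only [Fin.val_rev]
  rw [hrev]

lemma lamXY_smul (A : Matrix (Fin n) (Fin n) ℂ) (k : ℕ) {c : ℝ} (x y : ℝ) (hc : 0 < c) :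
    lamXY A k (c * x) (c * y) = c * lamXY A k x y := by
  apply kthEig_smul_pos (isHermitian_xy A x y) (isHermitian_xy A (c * x) (c * y)) hc
  push_cast
  rw [smul_add, smul_smul, smul_smul]

lemma lamXY_neg (A : Matrix (Fin n) (Fin n) ℂ) {k : ℕ} (hk1 : 1 ≤ k) (hkn : k ≤ n) (x y : ℝ) :
    lamXY A k (-x) (-y) = -(lamXY A (n - k + 1) x y) := by
  apply kthEig_neg (isHermitian_xy A x y) (isHermitian_xy A (-x) (-y)) _ hk1 hkn
  push_cast
  module

lemma det_pencil_dvd {N B : Matrix (Fin n) (Fin n) ℂ} (U : Matrix.unitaryGroup (Fin n) ℂ)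
    (d : Fin n → ℂ) (j₁ j₂ : Fin n) (hj : j₁ ≠ j₂) (hd1 : d j₁ = 0) (hd2 : d j₂ = 0)
    (hN : N = (U : Matrix (Fin n) (Fin n) ℂ) * diagonal d * star (U : Matrix (Fin n) (Fin n) ℂ)) :
    ∃ P : ℂ[X], ((X : ℂ[X])^2 ∣ P) ∧ ∀ s : ℂ, P.eval s = (N + s • B).det := by
  have hU : (U : Matrix (Fin n) (Fin n) ℂ) * star (U : Matrix (Fin n) (Fin n) ℂ) = 1 :=
    Matrix.mem_unitaryGroup_iff.mp U.2
  have hU' : star (U : Matrix (Fin n) (Fin n) ℂ) * (U : Matrix (Fin n) (Fin n) ℂ) = 1 :=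
    Matrix.mem_unitaryGroup_iff'.mp U.2
  set Cm : Matrix (Fin n) (Fin n) ℂ :=
    star (U : Matrix (Fin n) (Fin n) ℂ) * B * (U : Matrix (Fin n) (Fin n) ℂ) with hCm
  set Mp : Matrix (Fin n) (Fin n) ℂ[X] :=
    diagonal (fun j => C (d j)) + (X : ℂ[X]) • Cm.map C with hMp
  refine ⟨Mp.det, ?_, ?_⟩
  · rw [Matrix.det_apply]
    apply Finset.dvd_sum
    intro σ _
    have hdvd : ∀ jj, d jj = 0 → (X : ℂ[X]) ∣ Mp (σ jj) jj := by
      intro jj h0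
      have hMe : Mp (σ jj) jj = X * C (Cm (σ jj) jj) := by
        simp only [hMp, Matrix.add_apply, Matrix.smul_apply, Matrix.map_apply, smul_eq_mul]
        rw [Matrix.diagonal_apply]
        by_cases h : σ jj = jj <;> simp [h, h0]
      rw [hMe]
      exact dvd_mul_right _ _
    have h2 : j₂ ∈ (Finset.univ.erase j₁) := Finset.mem_erase.mpr ⟨hj.symm, Finset.mem_univ _⟩
    have hprod : (X : ℂ[X])^2 ∣ ∏ i, Mp (σ i) i := by
      rw [← Finset.mul_prod_erase Finset.univ _ (Finset.mem_univ j₁),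
        ← Finset.mul_prod_erase _ _ h2, pow_two, ← mul_assoc]
      exact Dvd.dvd.mul_right (mul_dvd_mul (hdvd j₁ hd1) (hdvd j₂ hd2)) _
    rw [Units.smul_def, zsmul_eq_mul]
    exact Dvd.dvd.mul_left hprod _
  · intro s
    have hmap : Mp.map (Polynomial.evalRingHom s) = diagonal d + s • Cm := by
      ext i j
      simp only [Matrix.map_apply, hMp, Matrix.add_apply, Matrix.smul_apply, smul_eq_mul,
        map_add, _root_.map_mul, eval_X, eval_C, coe_evalRingHom]
      rw [Matrix.diagonal_apply, Matrix.diagonal_apply]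
      split_ifs with h <;>
        simp only [eval_add, eval_mul, eval_X, eval_C, eval_zero, zero_add] <;> ring
    have hdet : (Polynomial.evalRingHom s) Mp.det = (Mp.map (Polynomial.evalRingHom s)).det :=
      RingHom.map_det _ _
    have hNB : N + s • B = (U : Matrix (Fin n) (Fin n) ℂ) * (diagonal d + s • Cm)
        * star (U : Matrix (Fin n) (Fin n) ℂ) := by
      rw [Matrix.mul_add, Matrix.add_mul, ← hN]
      congr 1
      rw [hCm]
      rw [Matrix.mul_smul, Matrix.smul_mul]
      congr 1
      symm
      calc (U : Matrix (Fin n) (Fin n) ℂ) * (star (U : Matrix (Fin n) (Fin n) ℂ) * B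
            * (U : Matrix (Fin n) (Fin n) ℂ)) * star (U : Matrix (Fin n) (Fin n) ℂ)
          = ((U : Matrix (Fin n) (Fin n) ℂ) * star (U : Matrix (Fin n) (Fin n) ℂ)) * B
            * ((U : Matrix (Fin n) (Fin n) ℂ) * star (U : Matrix (Fin n) (Fin n) ℂ)) := by
            noncomm_ring
        _ = B := by rw [hU]; simp
    show Mp.det.eval s = _
    rw [show Mp.det.eval s = (Polynomial.evalRingHom s) Mp.det from rfl, hdet, hmap, hNB,
      Matrix.det_mul, Matrix.det_mul, mul_comm, ← mul_assoc, ← Matrix.det_mul, hU',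
      Matrix.det_one, one_mul]

lemma eval_aeval_poly (φ : Fin 3 → ℝ[X]) (s : ℝ) (f : MvPolynomial (Fin 3) ℝ) :
    ((MvPolynomial.aeval φ) f).eval s = MvPolynomial.eval (fun j => (φ j).eval s) f := by
  induction f using MvPolynomial.induction_on with
  | C a => simp
  | add f g hf hg => simp [hf, hg]
  | mul_X f j hf => simp [hf]

lemma derivative_aeval_poly (i : Fin 3) (pv : Fin 3 → ℝ) (f : MvPolynomial (Fin 3) ℝ) :
    Polynomial.derivative
        ((MvPolynomial.aeval (fun j => if j = i then (X : ℝ[X]) else C (pv j))) f)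
      = (MvPolynomial.aeval (fun j => if j = i then (X : ℝ[X]) else C (pv j)))
          (MvPolynomial.pderiv i f) := by
  induction f using MvPolynomial.induction_on with
  | C a => simp
  | add f g hf hg => simp [hf, hg]
  | mul_X f j hf =>
    rw [_root_.map_mul, derivative_mul, hf, MvPolynomial.pderiv_mul, map_add, _root_.map_mul,
      _root_.map_mul, MvPolynomial.pderiv_X]
    by_cases h : j = i
    · subst h
      simp [Pi.single_apply]
    · simp [h, Pi.single_apply, Ne.symm h]

lemma pencil_eq (A : Matrix (Fin n) (Fin n) ℂ) (μ p₁ p₂ : ℝ) :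
    pencil A ![-μ, p₁, p₂]
      = (-(μ : ℂ)) • 1 + ((p₁ : ℂ) • ReM A + (p₂ : ℂ) • ImM A) := by
  unfold pencil
  simp only [Matrix.cons_val_zero, Matrix.cons_val_one, Matrix.head_cons, Matrix.cons_val_two,
    Matrix.tail_cons]
  push_cast
  module

lemma conj_decomp {S : Matrix (Fin n) (Fin n) ℂ} (hS : S.IsHermitian) (μ : ℝ) :
    (-(μ : ℂ)) • 1 + S
      = (hS.eigenvectorUnitary : Matrix (Fin n) (Fin n) ℂ)
        * diagonal (fun j => ((hS.eigenvalues j - μ : ℝ) : ℂ))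
        * star (hS.eigenvectorUnitary : Matrix (Fin n) (Fin n) ℂ) := by
  have hU : (hS.eigenvectorUnitary : Matrix (Fin n) (Fin n) ℂ)
      * star (hS.eigenvectorUnitary : Matrix (Fin n) (Fin n) ℂ) = 1 :=
    Matrix.mem_unitaryGroup_iff.mp hS.eigenvectorUnitary.2
  have hdiag : diagonal (fun j => ((hS.eigenvalues j - μ : ℝ) : ℂ))
      = (-(μ : ℂ)) • 1 + diagonal ((RCLike.ofReal : ℝ → ℂ) ∘ hS.eigenvalues) := by
    ext i j
    by_cases h : i = j <;>
      simp [Matrix.diagonal_apply, h, Matrix.one_apply, Complex.ofReal_sub, sub_eq_add_neg,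
        add_comm]
  rw [hdiag, Matrix.mul_add, Matrix.add_mul]
  congr 1
  · rw [Matrix.mul_smul, Matrix.smul_mul, Matrix.mul_one, hU]
  · exact hS.spectral_theorem

lemma pencil_update (A : Matrix (Fin n) (Fin n) ℂ) (v : Fin 3 → ℝ) (i : Fin 3) (s : ℝ) :
    pencil A (Function.update v i s)
      = pencil A v + ((s - v i : ℝ) : ℂ)
          • (![(1 : Matrix (Fin n) (Fin n) ℂ), ReM A, ImM A] i) := by
  have key : ∀ (a b c e : ℝ) (M1 M2 M3 : Matrix (Fin n) (Fin n) ℂ),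
      (e : ℂ) • M1 + (b : ℂ) • M2 + (c : ℂ) • M3
        = ((a : ℂ) • M1 + (b : ℂ) • M2 + (c : ℂ) • M3) + ((e - a : ℝ) : ℂ) • M1 := by
    intro a b c e M1 M2 M3
    rw [Complex.ofReal_sub, sub_smul]
    abel
  have key2 : ∀ (a b c e : ℝ) (M1 M2 M3 : Matrix (Fin n) (Fin n) ℂ),
      (a : ℂ) • M1 + (e : ℂ) • M2 + (c : ℂ) • M3
        = ((a : ℂ) • M1 + (b : ℂ) • M2 + (c : ℂ) • M3) + ((e - b : ℝ) : ℂ) • M2 := by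
    intro a b c e M1 M2 M3
    rw [Complex.ofReal_sub, sub_smul]
    abel
  have key3 : ∀ (a b c e : ℝ) (M1 M2 M3 : Matrix (Fin n) (Fin n) ℂ),
      (a : ℂ) • M1 + (b : ℂ) • M2 + (e : ℂ) • M3
        = ((a : ℂ) • M1 + (b : ℂ) • M2 + (c : ℂ) • M3) + ((e - c : ℝ) : ℂ) • M3 := by
    intro a b c e M1 M2 M3
    rw [Complex.ofReal_sub, sub_smul]
    abel
  fin_cases i
  · have h0 : Function.update v 0 s 0 = s := Function.update_self _ _ _
    have h1 : Function.update v 0 s 1 = v 1 := Function.update_of_ne (by decide) _ _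
    have h2 : Function.update v 0 s 2 = v 2 := Function.update_of_ne (by decide) _ _
    show pencil A (Function.update v 0 s) = pencil A v + ((s - v 0 : ℝ) : ℂ) • 1
    rw [pencil, pencil, h0, h1, h2]
    exact key (v 0) (v 1) (v 2) s _ _ _
  · have h0 : Function.update v 1 s 0 = v 0 := Function.update_of_ne (by decide) _ _
    have h1 : Function.update v 1 s 1 = s := Function.update_self _ _ _
    have h2 : Function.update v 1 s 2 = v 2 := Function.update_of_ne (by decide) _ _
    show pencil A (Function.update v 1 s) = pencil A v + ((s - v 1 : ℝ) : ℂ) • ReM A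
    rw [pencil, pencil, h0, h1, h2]
    exact key2 (v 0) (v 1) (v 2) s _ _ _
  · have h0 : Function.update v 2 s 0 = v 0 := Function.update_of_ne (by decide) _ _
    have h1 : Function.update v 2 s 1 = v 1 := Function.update_of_ne (by decide) _ _
    have h2 : Function.update v 2 s 2 = s := Function.update_self _ _ _
    show pencil A (Function.update v 2 s) = pencil A v + ((s - v 2 : ℝ) : ℂ) • ImM A
    rw [pencil, pencil, h0, h1, h2]
    exact key3 (v 0) (v 1) (v 2) s _ _ _


end Stmt12AuxSec

open MvPolynomial in
/-- If `λ_k(p₁,p₂) = λ_{n−k+1}(p₁,p₂)` for some `(p₁,p₂) ≠ (0,0)`,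
then (i) `Λ_k(A) ⊆ {a + ib : a p₁ + b p₂ = λ_k(p₁,p₂)}`, and (ii) if `k < (n+1)/2`
then `f_A` and its gradient vanish at `p = (−λ_k(p₁,p₂), p₁, p₂)`. -/
theorem stmt12 {n k : ℕ} (hk1 : 1 ≤ k) (hkn : k ≤ n)
    (A : Matrix (Fin n) (Fin n) ℂ)
    (fA : MvPolynomial (Fin 3) ℝ)
    (hfA : ∀ v : Fin 3 → ℝ, ((eval v fA : ℝ) : ℂ) = (pencil A v).det)
    (p₁ p₂ : ℝ) (hp : (p₁, p₂) ≠ (0, 0))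
    (heq : lamXY A k p₁ p₂ = lamXY A (n - k + 1) p₁ p₂) :
    (∀ z ∈ NumRange A k, z.re * p₁ + z.im * p₂ = lamXY A k p₁ p₂) ∧
    ((k : ℝ) < (n + 1) / 2 →
      eval ![-(lamXY A k p₁ p₂), p₁, p₂] fA = 0 ∧
      ∀ i : Fin 3, eval ![-(lamXY A k p₁ p₂), p₁, p₂] (pderiv i fA) = 0) := by
  have hn : 1 ≤ n := le_trans hk1 hkn
  set zp : ℂ := ⟨p₁, p₂⟩ with hzp
  have hzp0 : zp ≠ 0 := by
    intro h
    apply hp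
    rw [Complex.ext_iff] at h
    simpa [Prod.ext_iff] using h
  set r : ℝ := ‖zp‖ with hrdef
  have hr : 0 < r := norm_pos_iff.mpr hzp0
  set θ : ℝ := Complex.arg zp with hθ
  have hcos : Real.cos θ = r⁻¹ * p₁ := by
    rw [hθ, Complex.cos_arg hzp0, inv_mul_eq_div]
  have hsin : Real.sin θ = r⁻¹ * p₂ := by
    rw [hθ, Complex.sin_arg, inv_mul_eq_div]
  have hlam1 : lamTheta A k θ = r⁻¹ * lamXY A k p₁ p₂ := by
    rw [lamTheta, hcos, hsin, lamXY_smul A k p₁ p₂ (by positivity)]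
  have hlam2 : lamTheta A k (θ + Real.pi) = -(r⁻¹ * lamXY A k p₁ p₂) := by
    rw [lamTheta, Real.cos_add_pi, Real.sin_add_pi, hcos, hsin,
      lamXY_neg A hk1 hkn, lamXY_smul A _ p₁ p₂ (by positivity), ← heq]
  constructor
  · intro z hz
    have h1 := hz θ
    have h2 := hz (θ + Real.pi)
    rw [hlam1, hcos, hsin] at h1
    rw [hlam2, Real.cos_add_pi, Real.sin_add_pi, hcos, hsin] at h2
    have e1 : z.re * p₁ + z.im * p₂ ≤ lamXY A k p₁ p₂ := by
      have := mul_le_mul_of_nonneg_left h1 hr.le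
      have hrne : r ≠ 0 := hr.ne'
      field_simp at this
      linarith
    have h2' : r⁻¹ * lamXY A k p₁ p₂ ≤ z.re * (r⁻¹ * p₁) + z.im * (r⁻¹ * p₂) := by
      linarith
    have e2 : lamXY A k p₁ p₂ ≤ z.re * p₁ + z.im * p₂ := by
      have := mul_le_mul_of_nonneg_left h2' hr.le
      have hrne : r ≠ 0 := hr.ne'
      field_simp at this
      linarith
    linarith
  · intro hk2
    have h2k : 2 * k ≤ n := by
      have h' : ((2 * k : ℕ) : ℝ) < ((n + 1 : ℕ) : ℝ) := by push_cast; linarith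
      have h'' : 2 * k < n + 1 := by exact_mod_cast h'
      omega
    set S : Matrix (Fin n) (Fin n) ℂ := (p₁ : ℂ) • ReM A + (p₂ : ℂ) • ImM A with hSdef
    have hS : S.IsHermitian := isHermitian_xy A p₁ p₂
    set μ : ℝ := lamXY A k p₁ p₂ with hμdef
    have hμk : kthEig S k = μ := rfl
    have hμk' : kthEig S (n - k + 1) = μ := heq.symm
    have h1 : n - k < n := by omega
    have h1' : n - (n - k + 1) < n := by omega
    have hs1 : srtEig hS ⟨n - k, h1⟩ = μ := by rw [← kthEig_eq hS h1]; exact hμk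
    have hs2 : srtEig hS ⟨n - (n - k + 1), h1'⟩ = μ := by rw [← kthEig_eq hS h1']; exact hμk'
    set j₁ : Fin n := Tuple.sort hS.eigenvalues ⟨n - (n - k + 1), h1'⟩ with hj₁
    set j₂ : Fin n := Tuple.sort hS.eigenvalues ⟨n - k, h1⟩ with hj₂
    have hjne : j₁ ≠ j₂ := by
      intro h
      have h2 := (Tuple.sort hS.eigenvalues).injective h
      have h3 : n - (n - k + 1) = n - k := congrArg Fin.val h2
      omega
    have he1 : hS.eigenvalues j₁ = μ := hs2
    have he2 : hS.eigenvalues j₂ = μ := hs1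
    set pv : Fin 3 → ℝ := ![-μ, p₁, p₂] with hpv
    have hNdecomp : pencil A pv = (hS.eigenvectorUnitary : Matrix (Fin n) (Fin n) ℂ)
        * Matrix.diagonal (fun j => ((hS.eigenvalues j - μ : ℝ) : ℂ))
        * star (hS.eigenvectorUnitary : Matrix (Fin n) (Fin n) ℂ) := by
      rw [hpv, pencil_eq, ← hSdef]
      exact conj_decomp hS μ
    have hfa0 : MvPolynomial.eval pv fA = 0 := by
      have hdet : (pencil A pv).det = 0 := by
        rw [hNdecomp, Matrix.det_mul, Matrix.det_mul, Matrix.det_diagonal]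
        have hz : ∏ j, ((hS.eigenvalues j - μ : ℝ) : ℂ) = 0 :=
          Finset.prod_eq_zero (Finset.mem_univ j₁) (by rw [he1]; simp)
        rw [hz, mul_zero, zero_mul]
      have hv := hfA pv
      rw [hdet] at hv
      exact_mod_cast hv
    refine ⟨hfa0, ?_⟩
    intro i
    set φ : Fin 3 → Polynomial ℝ :=
      fun j => if j = i then (Polynomial.X : Polynomial ℝ) else Polynomial.C (pv j) with hφ
    set q : Polynomial ℝ := MvPolynomial.aeval φ fA with hq
    have hqeval : ∀ s : ℝ, q.eval s = MvPolynomial.eval (Function.update pv i s) fA := by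
      intro s
      rw [hq, eval_aeval_poly]
      have hpoint : (fun j => (φ j).eval s) = Function.update pv i s := by
        funext j
        rw [hφ]
        by_cases h : j = i
        · subst h; simp [Function.update_apply]
        · simp [h, Function.update_apply]
      rw [hpoint]
    obtain ⟨P, hdvd, hPeval⟩ :=
      det_pencil_dvd (B := ![(1 : Matrix (Fin n) (Fin n) ℂ), ReM A, ImM A] i)
        hS.eigenvectorUnitary (fun j => ((hS.eigenvalues j - μ : ℝ) : ℂ)) j₁ j₂ hjne
        (by simp [he1]) (by simp [he2]) hNdecomp
    have hkey : ∀ s : ℝ, ((q.eval s : ℝ) : ℂ) = P.eval ((s : ℂ) - ((pv i : ℝ) : ℂ)) := by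
      intro s
      rw [hqeval, hfA (Function.update pv i s), pencil_update A pv i s, hPeval]
      congr 3
      exact Complex.ofReal_sub s (pv i)
    set Q : Polynomial ℂ := q.map Complex.ofRealHom with hQ
    set a : ℂ := ((pv i : ℝ) : ℂ) with ha
    have hQR : Q = P.comp (Polynomial.X - Polynomial.C a) := by
      apply Polynomial.eq_of_infinite_eval_eq
      apply Set.infinite_of_injective_forall_mem (f := (Complex.ofReal : ℝ → ℂ))
        Complex.ofReal_injective
      intro s
      simp only [Set.mem_setOf_eq]
      rw [hQ, Polynomial.eval_map, show ((s : ℝ) : ℂ) = Complex.ofRealHom s from rfl,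
        Polynomial.eval₂_at_apply, Polynomial.eval_comp, Polynomial.eval_sub,
        Polynomial.eval_X, Polynomial.eval_C, Complex.ofRealHom_eq_coe]
      exact hkey s
    obtain ⟨g, hg⟩ := hdvd
    have hder0 : (Polynomial.derivative Q).eval a = 0 := by
      rw [hQR, hg, Polynomial.mul_comp, Polynomial.pow_comp, Polynomial.X_comp,
        Polynomial.derivative_mul, Polynomial.derivative_pow]
      simp
    have hQq : (Polynomial.derivative Q).eval a
        = (((Polynomial.derivative q).eval (pv i) : ℝ) : ℂ) := by
      rw [hQ, Polynomial.derivative_map, Polynomial.eval_map, ha,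
        show ((pv i : ℝ) : ℂ) = Complex.ofRealHom (pv i) from rfl,
        Polynomial.eval₂_at_apply, Complex.ofRealHom_eq_coe]
    have hqder : (Polynomial.derivative q).eval (pv i) = 0 := by
      have hc : (((Polynomial.derivative q).eval (pv i) : ℝ) : ℂ) = 0 := by
        rw [← hQq, hder0]
      exact_mod_cast hc
    have hrepr : Polynomial.derivative q = MvPolynomial.aeval φ (MvPolynomial.pderiv i fA) := by
      rw [hq, hφ]
      exact derivative_aeval_poly i pv fA
    rw [hrepr, eval_aeval_poly] at hqder
    have hfun : (fun j => (φ j).eval (pv i)) = pv := by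
      funext j
      rw [hφ]
      by_cases h : j = i
      · subst h; simp
      · simp [h]
    rw [hfun] at hqder
    exact hqder

end
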